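/- Weighted subject reduction for system U: if Φ derives Γ ⊢ t : τ in system U and t →w t', then there is a derivation Φ' of Γ ⊢ t' : τ in system U with |Φ| > |Φ'|. -/

import Mathlib

/-! # The Bang Calculus Revisited: common definitions.

Terms are represented with de Bruijn indices, so that all the meta-level
substitutions are capture-avoiding by construction. -/

/-- Terms of the λ!-calculus.  `esub t u` is the explicit substitution
`t[0\u]`: the (anonymous) binder scopes over `t`, not over `u`. -/
inductive Tm : Type
  | var : ℕ → Tm
  | app : Tm → Tm → Tm
  | lam : Tm → Tm
  | bang : Tm → Tm
  | der : Tm → Tm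
  | esub : Tm → Tm → Tm
  deriving DecidableEq

namespace Tm

/-- lifting a renaming under a binder -/
def liftR (f : ℕ → ℕ) : ℕ → ℕ
  | 0 => 0
  | k + 1 => f k + 1

/-- renaming of free variables -/
def rename (f : ℕ → ℕ) : Tm → Tm
  | var k => var (f k)
  | app t u => app (rename f t) (rename f u)
  | lam t => lam (rename (liftR f) t)
  | bang t => bang (rename f t)
  | der t => der (rename f t)
  | esub t u => esub (rename (liftR f) t) (rename f u)

/-- lifting a simultaneous substitution under a binder -/
def liftS (σ : ℕ → Tm) : ℕ → Tm
  | 0 => var 0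
  | k + 1 => rename (· + 1) (σ k)

/-- simultaneous (capture-avoiding) substitution -/
def subst (σ : ℕ → Tm) : Tm → Tm
  | var k => σ k
  | app t u => app (subst σ t) (subst σ u)
  | lam t => lam (subst (liftS σ) t)
  | bang t => bang (subst σ t)
  | der t => der (subst σ t)
  | esub t u => esub (subst (liftS σ) t) (subst σ u)

/-- capture-avoiding substitution of `u` for the variable `0` of `t`,
where the result is placed under `n` extra binders (and `u` already lives
at that depth). -/
def substIn (n : ℕ) (u : Tm) (t : Tm) : Tm :=
  subst (fun k => match k with
    | 0 => u
    | k + 1 => var (k + n)) t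

/-- capture-avoiding meta-level substitution `t{0 := u}` -/
def subst0 (u : Tm) (t : Tm) : Tm := substIn 0 u t

/-- plugging a term into a list context `L ::= ◻ | L[x\t]`; the head of the
list is the argument of the outermost explicit substitution. -/
def plug : List Tm → Tm → Tm
  | [], s => s
  | e :: L, s => esub (plug L s) e

/-- the w-size of a term -/
def wsize : Tm → ℕ
  | var _ => 0
  | app t u => 1 + wsize t + wsize u
  | lam t => 1 + wsize t
  | bang _ => 0
  | der t => 1 + wsize t
  | esub t u => 1 + wsize t + wsize u

end Tm

/-- the names of the three rewriting rules of the λ!-calculus -/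
inductive Rule : Type
  | dB | sb | db
  deriving DecidableEq

open Tm in
/-- the three rewriting rules, applied at the root (at a distance) -/
inductive Root : Rule → Tm → Tm → Prop
  | dB (L : List Tm) (t u : Tm) :
      Root .dB (app (plug L (lam t)) u)
               (plug L (esub t (rename (· + L.length) u)))
  | sb (L : List Tm) (t u : Tm) :
      Root .sb (esub t (plug L (bang u))) (plug L (substIn L.length u t))
  | db (L : List Tm) (t : Tm) :
      Root .db (der (plug L (bang t))) (plug L t)

/-- closure of each rule under weak contexts (no reduction under `bang`) -/
inductive Step : Rule → Tm → Tm → Prop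
  | root {r : Rule} {t t' : Tm} : Root r t t' → Step r t t'
  | appL {r t t'} (u : Tm) : Step r t t' → Step r (Tm.app t u) (Tm.app t' u)
  | appR {r u u'} (t : Tm) : Step r u u' → Step r (Tm.app t u) (Tm.app t u')
  | lam {r t t'} : Step r t t' → Step r (Tm.lam t) (Tm.lam t')
  | der {r t t'} : Step r t t' → Step r (Tm.der t) (Tm.der t')
  | esubL {r t t'} (u : Tm) : Step r t t' → Step r (Tm.esub t u) (Tm.esub t' u)
  | esubR {r u u'} (t : Tm) : Step r u u' → Step r (Tm.esub t u) (Tm.esub t u')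

/-- the weak reduction `→w` of the λ!-calculus -/
def StepW (t t' : Tm) : Prop := ∃ r, Step r t t'

/-- counted weak reduction: `RedCnt t (b, e) u` holds iff `t →w* u` using `b`
dB-steps and `e` steps of kind s!/d!. -/
inductive RedCnt : Tm → ℕ × ℕ → Tm → Prop
  | refl (t : Tm) : RedCnt t (0, 0) t
  | db {t t₁ u : Tm} {b e : ℕ} :
      Step .dB t t₁ → RedCnt t₁ (b, e) u → RedCnt t (b + 1, e) u
  | ex {t t₁ u : Tm} {b e : ℕ} :
      (Step .sb t t₁ ∨ Step .db t t₁) → RedCnt t₁ (b, e) u →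
      RedCnt t (b, e + 1) u

mutual
  /-- neutral w-normal terms -/
  inductive NeW : Tm → Prop
    | var (k : ℕ) : NeW (Tm.var k)
    | app {t u : Tm} : NaW t → NoW u → NeW (Tm.app t u)
    | der {t : Tm} : NbW t → NeW (Tm.der t)
    | esub {t u : Tm} : NeW t → NbW u → NeW (Tm.esub t u)
  /-- neutral-abs w-normal terms -/
  inductive NaW : Tm → Prop
    | bang (t : Tm) : NaW (Tm.bang t)
    | ne {t : Tm} : NeW t → NaW t
    | esub {t u : Tm} : NaW t → NbW u → NaW (Tm.esub t u)
  /-- neutral-bang w-normal terms -/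
  inductive NbW : Tm → Prop
    | ne {t : Tm} : NeW t → NbW t
    | lam {t : Tm} : NoW t → NbW (Tm.lam t)
    | esub {t u : Tm} : NbW t → NbW u → NbW (Tm.esub t u)
  /-- w-normal terms -/
  inductive NoW : Tm → Prop
    | na {t : Tm} : NaW t → NoW t
    | nb {t : Tm} : NbW t → NoW t
end

/-- clashes -/
inductive Clash : Tm → Prop
  | appBang (L : List Tm) (t u : Tm) : Clash (Tm.app (Tm.plug L (Tm.bang t)) u)
  | esubLam (L : List Tm) (t u : Tm) : Clash (Tm.esub t (Tm.plug L (Tm.lam u)))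
  | derLam (L : List Tm) (u : Tm) : Clash (Tm.der (Tm.plug L (Tm.lam u)))
  | appLam (L : List Tm) (t u : Tm) : Clash (Tm.app t (Tm.plug L (Tm.lam u)))

/-- `WSub t s` holds iff `t = W⟨s⟩` for some weak context `W` -/
inductive WSub : Tm → Tm → Prop
  | refl (t : Tm) : WSub t t
  | appL {t s : Tm} (u : Tm) : WSub t s → WSub (Tm.app t u) s
  | appR {u s : Tm} (t : Tm) : WSub u s → WSub (Tm.app t u) s
  | lam {t s : Tm} : WSub t s → WSub (Tm.lam t) s
  | der {t s : Tm} : WSub t s → WSub (Tm.der t) s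
  | esubL {t s : Tm} (u : Tm) : WSub t s → WSub (Tm.esub t u) s
  | esubR {u s : Tm} (t : Tm) : WSub u s → WSub (Tm.esub t u) s

/-- weak clash freeness -/
def Wcf (t : Tm) : Prop := ¬ ∃ s, WSub t s ∧ Clash s

mutual
  /-- neutral weak clash free normal terms -/
  inductive NeCF : Tm → Prop
    | var (k : ℕ) : NeCF (Tm.var k)
    | app {t u : Tm} : NeCF t → NaCF u → NeCF (Tm.app t u)
    | der {t : Tm} : NeCF t → NeCF (Tm.der t)
    | esub {t u : Tm} : NeCF t → NeCF u → NeCF (Tm.esub t u)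
  /-- neutral-abs weak clash free normal terms -/
  inductive NaCF : Tm → Prop
    | bang (t : Tm) : NaCF (Tm.bang t)
    | ne {t : Tm} : NeCF t → NaCF t
    | esub {t u : Tm} : NaCF t → NeCF u → NaCF (Tm.esub t u)
  /-- neutral-bang weak clash free normal terms -/
  inductive NbCF : Tm → Prop
    | ne {t : Tm} : NeCF t → NbCF t
    | lam {t : Tm} : NoCF t → NbCF (Tm.lam t)
    | esub {t u : Tm} : NbCF t → NeCF u → NbCF (Tm.esub t u)
  /-- weak clash free normal terms -/
  inductive NoCF : Tm → Prop
    | na {t : Tm} : NaCF t → NoCF t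
    | nb {t : Tm} : NbCF t → NoCF t
end

/-- Types of system 𝒰: base types, multiset types and arrow types.  A
multiset type is given by a list of types (a representative of the multiset
it determines). -/
inductive Ty : Type
  | base : ℕ → Ty
  | mult : List Ty → Ty
  | arr : List Ty → Ty → Ty

/-- typing contexts: functions from (de Bruijn) variables to multiset types -/
abbrev Ctx := ℕ → Multiset Ty

/-- the context mapping `k` to `M` and anything else to the empty multiset -/
def Ctx.single (k : ℕ) (M : Multiset Ty) : Ctx := fun j => if j = k then M else 0

/-- removing the (type of the) bound variable `0` from a context -/
def Ctx.tail (Γ : Ctx) : Ctx := fun k => Γ (k + 1)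

/-- extending a context with a multiset type for a fresh variable `0` -/
def Ctx.cons (M : Multiset Ty) (Γ : Ctx) : Ctx := fun k =>
  match k with
  | 0 => M
  | k + 1 => Γ k

/-- Sized typing of system 𝒰: `DerU Γ t τ n` means that there is a derivation
of `Γ ⊢ t : τ` whose size (number of rules, not counting `bg`) is `n`. -/
inductive DerU : Ctx → Tm → Ty → ℕ → Prop
  | ax (k : ℕ) (σ : Ty) : DerU (Ctx.single k {σ}) (Tm.var k) σ 1
  | app {Γ Δ : Ctx} {t u : Tm} {M : List Ty} {τ : Ty} {n m : ℕ} :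
      DerU Γ t (Ty.arr M τ) n → DerU Δ u (Ty.mult M) m →
      DerU (Γ + Δ) (Tm.app t u) τ (n + m + 1)
  | abs {Γ : Ctx} {t : Tm} {τ : Ty} {n : ℕ} (M : List Ty) :
      DerU Γ t τ n → Multiset.ofList M = Γ 0 →
      DerU (Ctx.tail Γ) (Tm.lam t) (Ty.arr M τ) (n + 1)
  | es {Γ Δ : Ctx} {t u : Tm} {σ : Ty} {M : List Ty} {n m : ℕ} :
      DerU Γ t σ n → DerU Δ u (Ty.mult M) m → Multiset.ofList M = Γ 0 →
      DerU (Ctx.tail Γ + Δ) (Tm.esub t u) σ (n + m + 1)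
  | bg {t : Tm} (prs : List (Ctx × Ty × ℕ)) :
      (∀ p ∈ prs, DerU p.1 t p.2.1 p.2.2) →
      DerU ((prs.map (·.1)).sum) (Tm.bang t)
           (Ty.mult (prs.map (·.2.1))) ((prs.map (·.2.2)).sum)
  | dr {Γ : Ctx} {t : Tm} {σ : Ty} {n : ℕ} :
      DerU Γ t (Ty.mult [σ]) n → DerU Γ (Tm.der t) σ (n + 1)

/-! ## The source λ-calculus with explicit substitutions (CBN / CBV) -/

/-- terms of the λ-calculus with explicit substitutions (de Bruijn) -/
inductive Lm : Type
  | var : ℕ → Lm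
  | app : Lm → Lm → Lm
  | lam : Lm → Lm
  | esub : Lm → Lm → Lm
  deriving DecidableEq

namespace Lm

def liftR (f : ℕ → ℕ) : ℕ → ℕ
  | 0 => 0
  | k + 1 => f k + 1

def rename (f : ℕ → ℕ) : Lm → Lm
  | var k => var (f k)
  | app t u => app (rename f t) (rename f u)
  | lam t => lam (rename (liftR f) t)
  | esub t u => esub (rename (liftR f) t) (rename f u)

def liftS (σ : ℕ → Lm) : ℕ → Lm
  | 0 => var 0
  | k + 1 => rename (· + 1) (σ k)

def subst (σ : ℕ → Lm) : Lm → Lm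
  | var k => σ k
  | app t u => app (subst σ t) (subst σ u)
  | lam t => lam (subst (liftS σ) t)
  | esub t u => esub (subst (liftS σ) t) (subst σ u)

def substIn (n : ℕ) (u : Lm) (t : Lm) : Lm :=
  subst (fun k => match k with
    | 0 => u
    | k + 1 => var (k + n)) t

/-- capture-avoiding meta-level substitution `t{0 := u}` -/
def subst0 (u : Lm) (t : Lm) : Lm := substIn 0 u t

def plug : List Lm → Lm → Lm
  | [], s => s
  | e :: L, s => esub (plug L s) e

/-- values -/
def IsVal : Lm → Prop
  | var _ => True
  | lam _ => True
  | _ => False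

/-- the n-size of a term -/
def nsize : Lm → ℕ
  | var _ => 0
  | lam t => 1 + nsize t
  | app t _ => 1 + nsize t
  | esub t _ => 1 + nsize t

/-- the v-size of a term -/
def vsize : Lm → ℕ
  | var _ => 0
  | lam _ => 0
  | app t u => 1 + vsize t + vsize u
  | esub t u => 1 + vsize t + vsize u

end Lm

/-- names of the CBN rules -/
inductive NRule : Type
  | dB | s
  deriving DecidableEq

/-- call-by-name reduction (closure of dB and s under CBN contexts) -/
inductive StepN : NRule → Lm → Lm → Prop
  | dB (L : List Lm) (t u : Lm) :
      StepN .dB (Lm.app (Lm.plug L (Lm.lam t)) u)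
                (Lm.plug L (Lm.esub t (Lm.rename (· + L.length) u)))
  | s (t u : Lm) : StepN .s (Lm.esub t u) (Lm.subst0 u t)
  | appL {r t t'} (u : Lm) : StepN r t t' → StepN r (Lm.app t u) (Lm.app t' u)
  | lam {r t t'} : StepN r t t' → StepN r (Lm.lam t) (Lm.lam t')
  | esubL {r t t'} (u : Lm) : StepN r t t' → StepN r (Lm.esub t u) (Lm.esub t' u)

/-- names of the CBV rules -/
inductive VRule : Type
  | dB | sv
  deriving DecidableEq

/-- call-by-value reduction (closure of dB and sv under CBV contexts) -/
inductive StepV : VRule → Lm → Lm → Prop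
  | dB (L : List Lm) (t u : Lm) :
      StepV .dB (Lm.app (Lm.plug L (Lm.lam t)) u)
                (Lm.plug L (Lm.esub t (Lm.rename (· + L.length) u)))
  | sv (L : List Lm) (t v : Lm) (hv : Lm.IsVal v) :
      StepV .sv (Lm.esub t (Lm.plug L v)) (Lm.plug L (Lm.substIn L.length v t))
  | appL {r t t'} (u : Lm) : StepV r t t' → StepV r (Lm.app t u) (Lm.app t' u)
  | appR {r u u'} (t : Lm) : StepV r u u' → StepV r (Lm.app t u) (Lm.app t u')
  | esubL {r t t'} (u : Lm) : StepV r t t' → StepV r (Lm.esub t u) (Lm.esub t' u)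
  | esubR {r u u'} (t : Lm) : StepV r u u' → StepV r (Lm.esub t u) (Lm.esub t u')

mutual
  /-- CBN neutral terms -/
  inductive NeN : Lm → Prop
    | var (k : ℕ) : NeN (Lm.var k)
    | app {t : Lm} (u : Lm) : NeN t → NeN (Lm.app t u)
  /-- CBN normal terms -/
  inductive NoN : Lm → Prop
    | lam {t : Lm} : NoN t → NoN (Lm.lam t)
    | ne {t : Lm} : NeN t → NoN t
end

mutual
  /-- CBV (substituted) variables -/
  inductive VrV : Lm → Prop
    | var (k : ℕ) : VrV (Lm.var k)
    | esub {t u : Lm} : VrV t → NeV u → VrV (Lm.esub t u)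
  /-- CBV neutral terms -/
  inductive NeV : Lm → Prop
    | app₁ {t u : Lm} : VrV t → NoV u → NeV (Lm.app t u)
    | app₂ {t u : Lm} : NeV t → NoV u → NeV (Lm.app t u)
    | esub {t u : Lm} : NeV t → NeV u → NeV (Lm.esub t u)
  /-- CBV normal terms -/
  inductive NoV : Lm → Prop
    | lam (t : Lm) : NoV (Lm.lam t)
    | vr {t : Lm} : VrV t → NoV t
    | ne {t : Lm} : NeV t → NoV t
    | esub {t u : Lm} : NoV t → NeV u → NoV (Lm.esub t u)
end

/-- counted CBN reduction, recording the number of dB- and s-steps -/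
inductive RedCntN : Lm → ℕ × ℕ → Lm → Prop
  | refl (t : Lm) : RedCntN t (0, 0) t
  | db {t t₁ u : Lm} {b e : ℕ} :
      StepN .dB t t₁ → RedCntN t₁ (b, e) u → RedCntN t (b + 1, e) u
  | s {t t₁ u : Lm} {b e : ℕ} :
      StepN .s t t₁ → RedCntN t₁ (b, e) u → RedCntN t (b, e + 1) u

/-- counted CBV reduction, recording the number of dB- and sv-steps -/
inductive RedCntV : Lm → ℕ × ℕ → Lm → Prop
  | refl (t : Lm) : RedCntV t (0, 0) t
  | db {t t₁ u : Lm} {b e : ℕ} :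
      StepV .dB t t₁ → RedCntV t₁ (b, e) u → RedCntV t (b + 1, e) u
  | sv {t t₁ u : Lm} {b e : ℕ} :
      StepV .sv t t₁ → RedCntV t₁ (b, e) u → RedCntV t (b, e + 1) u

/-- the CBN embedding into the λ!-calculus -/
def cbn : Lm → Tm
  | .var k => .var k
  | .lam t => .lam (cbn t)
  | .app t u => .app (cbn t) (.bang (cbn u))
  | .esub t u => .esub (cbn t) (.bang (cbn u))

/-- `deBang t = some s'` iff `t = L⟨!s⟩` and `s' = L⟨s⟩` -/
def deBang : Tm → Option Tm
  | .bang s => some s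
  | .esub t e => (deBang t).map (fun s => Tm.esub s e)
  | _ => none

/-- the CBV embedding into the λ!-calculus -/
def cbv : Lm → Tm
  | .var k => .bang (.var k)
  | .lam t => .bang (.lam (cbv t))
  | .app t u =>
      match deBang (cbv t) with
      | some r => Tm.app r (cbv u)
      | none => Tm.app (.der (cbv t)) (cbv u)
  | .esub t u => .esub (cbv t) (cbv u)

/-- Sized typing of system 𝒩 (call-by-name): `DerN Γ t τ n` means that there
is a derivation of `Γ ⊢ t : τ` of size `n` (counting all rules). -/
inductive DerN : Ctx → Lm → Ty → ℕ → Prop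
  | ax (k : ℕ) (σ : Ty) : DerN (Ctx.single k {σ}) (Lm.var k) σ 1
  | app {Γ : Ctx} {t u : Lm} {τ : Ty} {n : ℕ} (prs : List (Ctx × Ty × ℕ)) :
      DerN Γ t (Ty.arr (prs.map (·.2.1)) τ) n →
      (∀ p ∈ prs, DerN p.1 u p.2.1 p.2.2) →
      DerN (Γ + (prs.map (·.1)).sum) (Lm.app t u) τ
           (n + (prs.map (·.2.2)).sum + 1)
  | abs {Γ : Ctx} {t : Lm} {τ : Ty} {n : ℕ} (M : List Ty) :
      DerN Γ t τ n → Multiset.ofList M = Γ 0 →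
      DerN (Ctx.tail Γ) (Lm.lam t) (Ty.arr M τ) (n + 1)
  | es {Γ : Ctx} {t u : Lm} {τ : Ty} {n : ℕ} (prs : List (Ctx × Ty × ℕ)) :
      DerN Γ t τ n →
      Multiset.ofList (prs.map (·.2.1)) = Γ 0 →
      (∀ p ∈ prs, DerN p.1 u p.2.1 p.2.2) →
      DerN (Ctx.tail Γ + (prs.map (·.1)).sum) (Lm.esub t u) τ
           (n + (prs.map (·.2.2)).sum + 1)

/-- Sized typing of system 𝒱 (call-by-value): `DerV Γ t τ n` means that there
is a derivation of `Γ ⊢ t : τ` of size `n` (each rule counts 1, except that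
`ax` counts the cardinal of its multiset and `abs` contributes the sizes of
its premises plus the number of premises). -/
inductive DerV : Ctx → Lm → Ty → ℕ → Prop
  | ax (k : ℕ) (M : List Ty) :
      DerV (Ctx.single k (Multiset.ofList M)) (Lm.var k) (Ty.mult M) M.length
  | es {Γ Δ : Ctx} {t u : Lm} {σ : Ty} {M : List Ty} {n m : ℕ} :
      DerV Γ t σ n → DerV Δ u (Ty.mult M) m → Multiset.ofList M = Γ 0 →
      DerV (Ctx.tail Γ + Δ) (Lm.esub t u) σ (n + m + 1)
  | abs {t : Lm} (prs : List (Ctx × List Ty × Ty × ℕ)) :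
      (∀ p ∈ prs, DerV p.1 t p.2.2.1 p.2.2.2) →
      (∀ p ∈ prs, Multiset.ofList p.2.1 = p.1 0) →
      DerV ((prs.map (fun p => Ctx.tail p.1)).sum) (Lm.lam t)
           (Ty.mult (prs.map (fun p => Ty.arr p.2.1 p.2.2.1)))
           ((prs.map (·.2.2.2)).sum + prs.length)
  | app {Γ Δ : Ctx} {t u : Lm} {M : List Ty} {τ : Ty} {n m : ℕ} :
      DerV Γ t (Ty.mult [Ty.arr M τ]) n → DerV Δ u (Ty.mult M) m →
      DerV (Γ + Δ) (Lm.app t u) τ (n + m + 1)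

/-! ### Auxiliary material for weighted subject reduction -/

namespace SRaux

open Tm

/- ## Congruence lemmas for renaming and substitution -/

theorem liftR_congr {f g : ℕ → ℕ} (h : ∀ k, f k = g k) : ∀ k, Tm.liftR f k = Tm.liftR g k
  | 0 => rfl
  | k + 1 => by simp [Tm.liftR, h k]

theorem rename_congr : ∀ (t : Tm) {f g : ℕ → ℕ}, (∀ k, f k = g k) →
    Tm.rename f t = Tm.rename g t
  | .var k, _, _, h => by simp [Tm.rename, h k]
  | .app t u, _, _, h => by simp [Tm.rename, rename_congr t h, rename_congr u h]
  | .lam t, _, _, h => by simp [Tm.rename, rename_congr t (liftR_congr h)]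
  | .bang t, _, _, h => by simp [Tm.rename, rename_congr t h]
  | .der t, _, _, h => by simp [Tm.rename, rename_congr t h]
  | .esub t u, _, _, h => by
      simp [Tm.rename, rename_congr t (liftR_congr h), rename_congr u h]

theorem liftR_comp (f g : ℕ → ℕ) : ∀ k, Tm.liftR f (Tm.liftR g k) = Tm.liftR (fun k => f (g k)) k
  | 0 => rfl
  | _ + 1 => rfl

theorem rename_rename : ∀ (t : Tm) (f g : ℕ → ℕ),
    Tm.rename f (Tm.rename g t) = Tm.rename (fun k => f (g k)) t
  | .var k, _, _ => rfl
  | .app t u, _, _ => by simp [Tm.rename, rename_rename t, rename_rename u]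
  | .lam t, f, g => by
      simp only [Tm.rename, rename_rename t]
      exact congrArg Tm.lam (rename_congr t (liftR_comp f g))
  | .bang t, _, _ => by simp [Tm.rename, rename_rename t]
  | .der t, _, _ => by simp [Tm.rename, rename_rename t]
  | .esub t u, f, g => by
      simp only [Tm.rename, rename_rename t, rename_rename u, Tm.esub.injEq, and_true]
      exact rename_congr t (liftR_comp f g)

theorem rename_id : ∀ (t : Tm) {f : ℕ → ℕ}, (∀ k, f k = k) → Tm.rename f t = t
  | .var k, _, h => by simp [Tm.rename, h k]
  | .app t u, _, h => by simp [Tm.rename, rename_id t h, rename_id u h]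
  | .lam t, _, h => by
      simp only [Tm.rename, Tm.lam.injEq]
      exact rename_id t (fun k => by cases k <;> simp [Tm.liftR, h])
  | .bang t, _, h => by simp [Tm.rename, rename_id t h]
  | .der t, _, h => by simp [Tm.rename, rename_id t h]
  | .esub t u, _, h => by
      simp only [Tm.rename, Tm.esub.injEq]
      exact ⟨rename_id t (fun k => by cases k <;> simp [Tm.liftR, h]), rename_id u h⟩

theorem liftS_congr {σ σ' : ℕ → Tm} (h : ∀ k, σ k = σ' k) :
    ∀ k, Tm.liftS σ k = Tm.liftS σ' k
  | 0 => rfl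
  | k + 1 => by simp [Tm.liftS, h k]

theorem subst_congr : ∀ (t : Tm) {σ σ' : ℕ → Tm}, (∀ k, σ k = σ' k) →
    Tm.subst σ t = Tm.subst σ' t
  | .var k, _, _, h => h k
  | .app t u, _, _, h => by simp [Tm.subst, subst_congr t h, subst_congr u h]
  | .lam t, _, _, h => by simp [Tm.subst, subst_congr t (liftS_congr h)]
  | .bang t, _, _, h => by simp [Tm.subst, subst_congr t h]
  | .der t, _, _, h => by simp [Tm.subst, subst_congr t h]
  | .esub t u, _, _, h => by
      simp [Tm.subst, subst_congr t (liftS_congr h), subst_congr u h]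

/- ## Pushforward of a context along an injective renaming -/

open Classical in
/-- pushing a typing context forward along a renaming -/
noncomputable def push (f : ℕ → ℕ) (Γ : Ctx) : Ctx :=
  fun j => if h : ∃ k, f k = j then Γ h.choose else 0

open Classical in
theorem push_apply_self {f : ℕ → ℕ} (hf : Function.Injective f) (Γ : Ctx) (k : ℕ) :
    push f Γ (f k) = Γ k := by
  have h : ∃ k', f k' = f k := ⟨k, rfl⟩
  unfold push
  rw [dif_pos h, hf h.choose_spec]

open Classical in
theorem push_not_mem {f : ℕ → ℕ} {j : ℕ} (h : ∀ k, f k ≠ j) (Γ : Ctx) :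
    push f Γ j = 0 := by
  unfold push
  rw [dif_neg (fun ⟨k, hk⟩ => h k hk)]

theorem push_eq {f : ℕ → ℕ} (hf : Function.Injective f) {Γ Δ : Ctx}
    (h1 : ∀ k, Δ (f k) = Γ k) (h2 : ∀ j, (∀ k, f k ≠ j) → Δ j = 0) :
    push f Γ = Δ := by
  funext j
  by_cases h : ∃ k, f k = j
  · obtain ⟨k, hk⟩ := h
    rw [← hk, push_apply_self hf, h1]
  · rw [push_not_mem (fun k hk => h ⟨k, hk⟩), h2 j (fun k hk => h ⟨k, hk⟩)]

open Classical in
theorem push_add (f : ℕ → ℕ) (Γ Δ : Ctx) :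
    push f (Γ + Δ) = push f Γ + push f Δ := by
  funext j
  show push f (Γ + Δ) j = push f Γ j + push f Δ j
  unfold push
  by_cases h : ∃ k, f k = j
  · rw [dif_pos h, dif_pos h, dif_pos h]; rfl
  · rw [dif_neg h, dif_neg h, dif_neg h]; simp

open Classical in
theorem push_zero (f : ℕ → ℕ) : push f 0 = 0 := by
  funext j
  show push f 0 j = 0
  unfold push
  by_cases h : ∃ k, f k = j
  · rw [dif_pos h]; rfl
  · rw [dif_neg h]

theorem push_single {f : ℕ → ℕ} (hf : Function.Injective f) (k : ℕ) (M : Multiset Ty) :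
    push f (Ctx.single k M) = Ctx.single (f k) M := by
  apply push_eq hf
  · intro k'
    by_cases h : k' = k
    · subst h; simp [Ctx.single]
    · have hfk : f k' ≠ f k := fun e => h (hf e)
      simp [Ctx.single, h, hfk]
  · intro j hj
    have : j ≠ f k := fun e => hj k e.symm
    simp [Ctx.single, this]

theorem push_sum_list (f : ℕ → ℕ) : ∀ (l : List Ctx),
    push f l.sum = (l.map (push f)).sum
  | [] => push_zero f
  | a :: l => by simp [push_add, push_sum_list f l]

theorem liftR_inj {f : ℕ → ℕ} (hf : Function.Injective f) :
    Function.Injective (Tm.liftR f) := by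
  intro a b h
  cases a <;> cases b <;> simp [Tm.liftR] at h ⊢
  · exact hf h

open Classical in
theorem push_liftR_zero (f : ℕ → ℕ) (Γ : Ctx) : push (Tm.liftR f) Γ 0 = Γ 0 := by
  have h : ∃ k, Tm.liftR f k = 0 := ⟨0, rfl⟩
  unfold push
  rw [dif_pos h]
  have hc := h.choose_spec
  cases hh : h.choose with
  | zero => rfl
  | succ m => rw [hh] at hc; simp [Tm.liftR] at hc

theorem tail_push_liftR {f : ℕ → ℕ} (hf : Function.Injective f) (Γ : Ctx) :
    Ctx.tail (push (Tm.liftR f) Γ) = push f (Ctx.tail Γ) := by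
  refine (push_eq hf ?_ ?_).symm
  · intro k
    show push (Tm.liftR f) Γ (f k + 1) = Γ (k + 1)
    exact push_apply_self (liftR_inj hf) Γ (k + 1)
  · intro j hj
    show push (Tm.liftR f) Γ (j + 1) = 0
    apply push_not_mem
    intro k hk
    cases k with
    | zero => simp [Tm.liftR] at hk
    | succ m => simp [Tm.liftR] at hk; exact hj m hk

theorem shift_inj (i : ℕ) : Function.Injective (· + i : ℕ → ℕ) := by
  intro a b h
  have h' : a + i = b + i := h
  omega

theorem push_shift_zero (Γ : Ctx) : push (· + 0) Γ = Γ := by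
  apply push_eq (shift_inj 0)
  · intro k; rfl
  · intro j hj; exact absurd rfl (hj j)

theorem tail_push_shift_succ (i : ℕ) (Γ : Ctx) :
    Ctx.tail (push (· + (i + 1)) Γ) = push (· + i) Γ := by
  refine (push_eq (shift_inj i) ?_ ?_).symm
  · intro k
    show push (· + (i + 1)) Γ (k + i + 1) = Γ k
    have : k + i + 1 = k + (i + 1) := by omega
    rw [this]
    exact push_apply_self (shift_inj (i + 1)) Γ k
  · intro j hj
    show push (· + (i + 1)) Γ (j + 1) = 0
    apply push_not_mem
    intro k hk
    have hk' : k + (i + 1) = j + 1 := hk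
    exact hj k (by omega)

theorem push_shift_succ_zero (i : ℕ) (Γ : Ctx) : push (· + (i + 1)) Γ 0 = 0 :=
  push_not_mem (fun k hk => by have hk' : k + (i + 1) = 0 := hk; omega) Γ

/- ## Typed renaming -/

theorem derU_rename : ∀ {Γ : Ctx} {t : Tm} {τ : Ty} {p : ℕ}, DerU Γ t τ p →
    ∀ (f : ℕ → ℕ), Function.Injective f → DerU (push f Γ) (Tm.rename f t) τ p := by
  intro Γ t τ p h
  induction h with
  | ax k σ => intro f hf; rw [push_single hf]; exact DerU.ax (f k) σ
  | app h1 h2 ih1 ih2 =>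
      intro f hf; rw [push_add]; exact DerU.app (ih1 f hf) (ih2 f hf)
  | abs M h hM ih =>
      intro f hf
      have := DerU.abs M (ih (Tm.liftR f) (liftR_inj hf))
        (by rw [push_liftR_zero]; exact hM)
      rwa [tail_push_liftR hf] at this
  | es h1 h2 hM ih1 ih2 =>
      intro f hf
      have := DerU.es (ih1 (Tm.liftR f) (liftR_inj hf)) (ih2 f hf)
        (by rw [push_liftR_zero]; exact hM)
      rw [push_add, ← tail_push_liftR hf]
      exact this
  | bg prs hder ih =>
      intro f hf
      have hb := DerU.bg (prs.map fun pr => (push f pr.1, pr.2))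
        (fun pq hpq => by
          obtain ⟨pr, hpr, rfl⟩ := List.mem_map.mp hpq
          exact ih pr hpr f hf)
      have e1 : ((prs.map fun pr => (push f pr.1, pr.2)).map (·.1)) =
          (prs.map (·.1)).map (push f) := by
        simp [List.map_map, Function.comp]
      have e2 : ((prs.map fun pr => (push f pr.1, pr.2)).map (·.2.1)) =
          prs.map (·.2.1) := by simp [List.map_map, Function.comp]
      have e3 : ((prs.map fun pr => (push f pr.1, pr.2)).map (·.2.2)) =
          prs.map (·.2.2) := by simp [List.map_map, Function.comp]
      rw [e1, e2, e3, ← push_sum_list] at hb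
      exact hb
  | dr h ih => intro f hf; exact DerU.dr (ih f hf)

/- ## Context surgery for substitution -/

/-- removing variable `j` from a context and shifting the variables above it
by `n - 1` (they end up under `n` binders, one binder having disappeared) -/
def ctxOut (j n : ℕ) (Γ : Ctx) : Ctx := fun m =>
  if m < j then Γ m else if j + n ≤ m then Γ (m - n + 1) else 0

theorem ctxOut_add (j n : ℕ) (Γ Δ : Ctx) :
    ctxOut j n (Γ + Δ) = ctxOut j n Γ + ctxOut j n Δ := by
  funext m
  show ctxOut j n (Γ + Δ) m = ctxOut j n Γ m + ctxOut j n Δ m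
  unfold ctxOut
  split_ifs <;> simp <;> rfl

theorem ctxOut_zero (j n : ℕ) : ctxOut j n 0 = 0 := by
  funext m
  show ctxOut j n 0 m = 0
  unfold ctxOut
  split_ifs <;> rfl

theorem ctxOut_apply_zero_succ (j n : ℕ) (Γ : Ctx) : ctxOut (j + 1) n Γ 0 = Γ 0 := by
  simp [ctxOut]

theorem tail_ctxOut (j n : ℕ) (Γ : Ctx) :
    Ctx.tail (ctxOut (j + 1) n Γ) = ctxOut j n (Ctx.tail Γ) := by
  funext m
  show ctxOut (j + 1) n Γ (m + 1) = ctxOut j n (Ctx.tail Γ) m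
  unfold ctxOut Ctx.tail
  split_ifs <;> first
    | rfl
    | (congr 1; omega)
    | (exfalso; omega)

theorem ctxOut_single_eq (j n : ℕ) (M : Multiset Ty) :
    ctxOut j n (Ctx.single j M) = 0 := by
  funext m
  show ctxOut j n (Ctx.single j M) m = 0
  unfold ctxOut Ctx.single
  split_ifs <;> first | rfl | (exfalso; omega)

theorem ctxOut_single_lt {k j : ℕ} (h : k < j) (n : ℕ) (M : Multiset Ty) :
    ctxOut j n (Ctx.single k M) = Ctx.single k M := by
  funext m
  show ctxOut j n (Ctx.single k M) m = Ctx.single k M m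
  unfold ctxOut Ctx.single
  split_ifs <;> first | rfl | (exfalso; omega)

theorem ctxOut_single_gt {k j : ℕ} (h : j < k) (n : ℕ) (M : Multiset Ty) :
    ctxOut j n (Ctx.single k M) = Ctx.single (k - 1 + n) M := by
  funext m
  show ctxOut j n (Ctx.single k M) m = Ctx.single (k - 1 + n) M m
  unfold ctxOut Ctx.single
  split_ifs <;> first | rfl | (exfalso; omega)

theorem ctxOut_zero_eq_push (n : ℕ) (Γ : Ctx) :
    ctxOut 0 n Γ = push (· + n) (Ctx.tail Γ) := by
  refine (push_eq (shift_inj n) ?_ ?_).symm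
  · intro k
    show ctxOut 0 n Γ (k + n) = Γ (k + 1)
    unfold ctxOut
    split_ifs <;> first | (congr 1; omega) | (exfalso; omega)
  · intro j hj
    show ctxOut 0 n Γ j = 0
    unfold ctxOut
    split_ifs <;> first | rfl | (exfalso; exact hj (j - n) (by omega))

/- ## Sums of contexts, pointwise -/

theorem lsum_apply : ∀ (l : List Ctx) (j : ℕ),
    l.sum j = (l.map (fun Γ => Γ j)).sum
  | [], _ => rfl
  | a :: l, j => by
      simp only [List.sum_cons, List.map_cons]
      show a j + l.sum j = _
      rw [lsum_apply l j]

theorem msum_apply (S : Multiset Ctx) (j : ℕ) :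
    S.sum j = (S.map (fun Γ => Γ j)).sum := by
  induction S using Multiset.induction_on with
  | empty => rfl
  | cons a S ih =>
      simp only [Multiset.sum_cons, Multiset.map_cons]
      show a j + S.sum j = _
      rw [ih]

theorem tail_add (Γ Δ : Ctx) : Ctx.tail (Γ + Δ) = Ctx.tail Γ + Ctx.tail Δ := rfl

theorem tail_zero : Ctx.tail 0 = 0 := rfl

theorem msum_tail (S : Multiset Ctx) :
    Ctx.tail S.sum = (S.map Ctx.tail).sum := by
  induction S using Multiset.induction_on with
  | empty => rfl
  | cons a S ih =>
      simp only [Multiset.sum_cons, Multiset.map_cons, tail_add, ih, Multiset.sum_cons]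

/- ## Splitting a multiset along a sum of images -/

theorem multiset_map_split {α β : Type _} (f : α → β) (A : Multiset β) {B : Multiset β} :
    ∀ (P : Multiset α), P.map f = A + B →
    ∃ P₁ P₂, P = P₁ + P₂ ∧ P₁.map f = A ∧ P₂.map f = B := by
  induction A using Multiset.induction_on with
  | empty =>
      intro P h
      exact ⟨0, P, by simp, by simp, by simpa using h⟩
  | cons a A ih =>
      intro P h
      have ha : a ∈ P.map f := by rw [h, Multiset.cons_add]; exact Multiset.mem_cons_self _ _
      obtain ⟨x, hxP, hfx⟩ := Multiset.mem_map.mp ha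
      obtain ⟨P', rfl⟩ := Multiset.exists_cons_of_mem hxP
      rw [Multiset.map_cons, hfx, Multiset.cons_add] at h
      obtain ⟨P₁, P₂, rfl, h1, h2⟩ := ih P' ((Multiset.cons_inj_right a).mp h)
      exact ⟨x ::ₘ P₁, P₂, by rw [Multiset.cons_add], by rw [Multiset.map_cons, hfx, h1], h2⟩

/- ## The substitution function at level `j`, depth `n` -/

/-- the simultaneous substitution replacing variable `j` by `u` (renamed by
`j`) and shifting the variables above `j` by `n - 1` -/
def Sg (j n : ℕ) (u : Tm) : ℕ → Tm := fun k =>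
  if k < j then .var k else if k = j then .rename (· + j) u else .var (k - 1 + n)

theorem liftS_Sg (j n : ℕ) (u : Tm) : ∀ k, Tm.liftS (Sg j n u) k = Sg (j + 1) n u k
  | 0 => by simp [Tm.liftS, Sg]
  | k + 1 => by
      simp only [Tm.liftS, Sg]
      by_cases h1 : k < j
      · simp [h1, show k + 1 < j + 1 by omega, Tm.rename]
      · by_cases h2 : k = j
        · subst h2
          rw [if_neg (lt_irrefl k), if_pos rfl, if_neg (lt_irrefl (k + 1)),
            if_pos rfl, rename_rename]
          exact rename_congr u (fun m => by
            show m + k + 1 = m + (k + 1)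
            omega)
        · have h3 : ¬(k + 1 < j + 1) := by omega
          have h4 : k + 1 ≠ j + 1 := by omega
          simp only [h1, h2, h3, h4, if_false, Tm.rename, Tm.var.injEq]
          omega

theorem substIn_eq_subst_Sg (n : ℕ) (u t : Tm) :
    Tm.substIn n u t = Tm.subst (Sg 0 n u) t := by
  apply subst_congr
  intro k
  cases k with
  | zero => simp only [Sg, lt_irrefl, if_false, if_pos rfl]
            exact (rename_id u (fun k => rfl)).symm
  | succ k => simp [Sg]

/- ## The weighted substitution lemma -/

theorem substGen : ∀ {Γ : Ctx} {t : Tm} {σ : Ty} {p : ℕ}, DerU Γ t σ p →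
    ∀ (j n : ℕ) (u : Tm) (P : Multiset (Ctx × Ty × ℕ)),
    (∀ pr ∈ P, DerU pr.1 u pr.2.1 pr.2.2) →
    P.map (fun pr => pr.2.1) = Γ j →
    ∃ m, DerU (ctxOut j n Γ + (P.map (fun pr => push (· + j) pr.1)).sum)
              (Tm.subst (Sg j n u) t) σ m ∧
         m + Multiset.card (Γ j) = p + (P.map (fun pr => pr.2.2)).sum := by
  intro Γ t σ p h
  induction h with
  | ax k σ =>
      intro j n u P hP hPt
      rcases Nat.lt_trichotomy k j with hkj | hkj | hkj
      · have hz : Ctx.single k {σ} j = 0 := by simp [Ctx.single, show j ≠ k by omega]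
        have hP0 : P = 0 := Multiset.map_eq_zero.mp (by rw [hPt, hz])
        subst hP0
        refine ⟨1, ?_, by simp [hz]⟩
        simp only [Multiset.map_zero, Multiset.sum_zero, add_zero,
          ctxOut_single_lt hkj]
        show DerU (Ctx.single k {σ}) (Sg j n u k) σ 1
        simp only [Sg, if_pos hkj]
        exact DerU.ax k σ
      · subst hkj
        have hone : Ctx.single k {σ} k = {σ} := by simp [Ctx.single]
        rw [hone] at hPt
        obtain ⟨pr, hPs, hfpr⟩ := Multiset.map_eq_singleton.mp hPt
        subst hPs
        have hd := hP pr (Multiset.mem_singleton_self pr)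
        rw [hfpr] at hd
        refine ⟨pr.2.2, ?_, by simp [hone]; omega⟩
        simp only [ctxOut_single_eq, Multiset.map_singleton, Multiset.sum_singleton,
          zero_add]
        show DerU (push (· + k) pr.1) (Sg k n u k) σ pr.2.2
        simp only [Sg, lt_irrefl, if_false, if_pos rfl]
        exact derU_rename hd (· + k) (shift_inj k)
      · have hz : Ctx.single k {σ} j = 0 := by simp [Ctx.single, show j ≠ k by omega]
        have hP0 : P = 0 := Multiset.map_eq_zero.mp (by rw [hPt, hz])
        subst hP0
        refine ⟨1, ?_, by simp [hz]⟩
        simp only [Multiset.map_zero, Multiset.sum_zero, add_zero,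
          ctxOut_single_gt hkj]
        show DerU (Ctx.single (k - 1 + n) {σ}) (Sg j n u k) σ 1
        simp only [Sg, show ¬(k < j) by omega, show k ≠ j by omega, if_false]
        exact DerU.ax (k - 1 + n) σ
  | @app Γ₁ Δ₁ t₁ u₁ M τ n₁ m₁ h1 h2 ih1 ih2 =>
      intro j n u P hP hPt
      obtain ⟨P₁, P₂, rfl, hm1, hm2⟩ :=
        multiset_map_split (fun pr => pr.2.1) (Γ₁ j) P hPt
      obtain ⟨q₁, d₁, e₁⟩ := ih1 j n u P₁
        (fun pr hpr => hP pr (Multiset.mem_add.mpr (Or.inl hpr))) hm1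
      obtain ⟨q₂, d₂, e₂⟩ := ih2 j n u P₂
        (fun pr hpr => hP pr (Multiset.mem_add.mpr (Or.inr hpr))) hm2
      refine ⟨q₁ + q₂ + 1, ?_, ?_⟩
      · have hc : ctxOut j n (Γ₁ + Δ₁) + ((P₁ + P₂).map (fun pr => push (· + j) pr.1)).sum
            = (ctxOut j n Γ₁ + (P₁.map (fun pr => push (· + j) pr.1)).sum)
              + (ctxOut j n Δ₁ + (P₂.map (fun pr => push (· + j) pr.1)).sum) := by
          rw [ctxOut_add, Multiset.map_add, Multiset.sum_add]; abel
        rw [hc]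
        exact DerU.app d₁ d₂
      · have hcard : Multiset.card ((Γ₁ + Δ₁) j) =
            Multiset.card (Γ₁ j) + Multiset.card (Δ₁ j) := Multiset.card_add _ _
        rw [hcard, Multiset.map_add, Multiset.sum_add]
        omega
  | @abs Γb tb τb nb M h hM ih =>
      intro j n u P hP hPt
      obtain ⟨m, d, e⟩ := ih (j + 1) n u P hP hPt
      have h0 : ((P.map (fun pr => push (· + (j + 1)) pr.1)).sum) 0 = 0 := by
        rw [msum_apply]
        apply Multiset.sum_eq_zero
        intro x hx
        obtain ⟨y, hy, rfl⟩ := Multiset.mem_map.mp hx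
        obtain ⟨pr, hpr, hpr2⟩ := Multiset.mem_map.mp hy
        rw [← hpr2]
        exact push_shift_succ_zero j pr.1
      have hC0 : (ctxOut (j + 1) n Γb + (P.map (fun pr => push (· + (j + 1)) pr.1)).sum) 0
          = Γb 0 := by
        show ctxOut (j + 1) n Γb 0 + _ = _
        rw [ctxOut_apply_zero_succ, h0, add_zero]
      have hd := DerU.abs M d (by rw [hM, hC0])
      have htail : Ctx.tail (ctxOut (j + 1) n Γb +
            (P.map (fun pr => push (· + (j + 1)) pr.1)).sum)
          = ctxOut j n (Ctx.tail Γb) + (P.map (fun pr => push (· + j) pr.1)).sum := by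
        rw [tail_add, tail_ctxOut, msum_tail, Multiset.map_map]
        congr 1
        exact congrArg Multiset.sum
          (Multiset.map_congr rfl (fun pr _ => tail_push_shift_succ j pr.1))
      rw [htail] at hd
      refine ⟨m + 1, ?_, ?_⟩
      · show DerU _ (Tm.lam (Tm.subst (Tm.liftS (Sg j n u)) tb)) _ _
        rw [subst_congr tb (liftS_Sg j n u)]
        exact hd
      · show m + 1 + Multiset.card (Γb (j + 1)) = nb + 1 + _
        omega
  | @es Γ₁ Δ₂ tb e₂ σb M nb m₂ h1 h2 hM ih1 ih2 =>
      intro j n u P hP hPt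
      obtain ⟨P₁, P₂, rfl, hm1, hm2⟩ :=
        multiset_map_split (fun pr => pr.2.1) (Γ₁ (j + 1)) P hPt
      obtain ⟨q₁, d₁, e₁⟩ := ih1 (j + 1) n u P₁
        (fun pr hpr => hP pr (Multiset.mem_add.mpr (Or.inl hpr))) hm1
      obtain ⟨q₂, d₂, e₂'⟩ := ih2 j n u P₂
        (fun pr hpr => hP pr (Multiset.mem_add.mpr (Or.inr hpr))) hm2
      have h0 : ((P₁.map (fun pr => push (· + (j + 1)) pr.1)).sum) 0 = 0 := by
        rw [msum_apply]
        apply Multiset.sum_eq_zero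
        intro x hx
        obtain ⟨y, hy, rfl⟩ := Multiset.mem_map.mp hx
        obtain ⟨pr, hpr, hpr2⟩ := Multiset.mem_map.mp hy
        rw [← hpr2]
        exact push_shift_succ_zero j pr.1
      have hC0 : (ctxOut (j + 1) n Γ₁ + (P₁.map (fun pr => push (· + (j + 1)) pr.1)).sum) 0
          = Γ₁ 0 := by
        show ctxOut (j + 1) n Γ₁ 0 + _ = _
        rw [ctxOut_apply_zero_succ, h0, add_zero]
      have hd := DerU.es d₁ d₂ (by rw [hM, hC0])
      have htail : Ctx.tail (ctxOut (j + 1) n Γ₁ +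
            (P₁.map (fun pr => push (· + (j + 1)) pr.1)).sum)
          = ctxOut j n (Ctx.tail Γ₁) + (P₁.map (fun pr => push (· + j) pr.1)).sum := by
        rw [tail_add, tail_ctxOut, msum_tail, Multiset.map_map]
        congr 1
        exact congrArg Multiset.sum
          (Multiset.map_congr rfl (fun pr _ => tail_push_shift_succ j pr.1))
      rw [htail] at hd
      refine ⟨q₁ + q₂ + 1, ?_, ?_⟩
      · have hc : ctxOut j n (Ctx.tail Γ₁ + Δ₂) +
              ((P₁ + P₂).map (fun pr => push (· + j) pr.1)).sum
            = (ctxOut j n (Ctx.tail Γ₁) + (P₁.map (fun pr => push (· + j) pr.1)).sum)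
              + (ctxOut j n Δ₂ + (P₂.map (fun pr => push (· + j) pr.1)).sum) := by
          rw [ctxOut_add, Multiset.map_add, Multiset.sum_add]; abel
        rw [hc]
        show DerU _ (Tm.esub (Tm.subst (Tm.liftS (Sg j n u)) tb) (Tm.subst (Sg j n u) e₂)) _ _
        rw [subst_congr tb (liftS_Sg j n u)]
        exact hd
      · have hcard : Multiset.card ((Ctx.tail Γ₁ + Δ₂) j) =
            Multiset.card (Γ₁ (j + 1)) + Multiset.card (Δ₂ j) := Multiset.card_add _ _
        rw [hcard, Multiset.map_add, Multiset.sum_add]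
        omega
  | @bg tb prs hder ih =>
      intro j n u P hP hPt
      -- inner recursion over the list of premises
      have hrec : ∀ (l : List (Ctx × Ty × ℕ)),
          (∀ a ∈ l, ∀ (Q : Multiset (Ctx × Ty × ℕ)),
            (∀ pr ∈ Q, DerU pr.1 u pr.2.1 pr.2.2) →
            Q.map (fun pr => pr.2.1) = a.1 j →
            ∃ m, DerU (ctxOut j n a.1 + (Q.map (fun pr => push (· + j) pr.1)).sum)
                      (Tm.subst (Sg j n u) tb) a.2.1 m ∧
                 m + Multiset.card (a.1 j) = a.2.2 + (Q.map (fun pr => pr.2.2)).sum) →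
          ∀ (Q : Multiset (Ctx × Ty × ℕ)),
            (∀ pr ∈ Q, DerU pr.1 u pr.2.1 pr.2.2) →
            Q.map (fun pr => pr.2.1) = (l.map (fun a => a.1 j)).sum →
            ∃ l' : List (Ctx × Ty × ℕ),
              (∀ a ∈ l', DerU a.1 (Tm.subst (Sg j n u) tb) a.2.1 a.2.2) ∧
              l'.map (fun a => a.2.1) = l.map (fun a => a.2.1) ∧
              (l'.map (fun a => a.1)).sum =
                ctxOut j n ((l.map (fun a => a.1)).sum) +
                  (Q.map (fun pr => push (· + j) pr.1)).sum ∧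
              (l'.map (fun a => a.2.2)).sum +
                  Multiset.card (((l.map (fun a : Ctx × Ty × ℕ => a.1)).sum) j)
                = (l.map (fun a => a.2.2)).sum + (Q.map (fun pr => pr.2.2)).sum := by
        intro l
        induction l with
        | nil =>
            intro _ Q hQ hQt
            have hQt0 : Multiset.map (fun pr => pr.2.1) Q = 0 := by
              simpa using hQt
            have hQ0 : Q = 0 := Multiset.map_eq_zero.mp hQt0
            subst hQ0
            refine ⟨[], by simp, rfl, ?_, ?_⟩
            · simp [ctxOut_zero]
            · simp
        | cons a l ihl =>
            intro hIH Q hQ hQt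
            simp only [List.map_cons, List.sum_cons] at hQt
            obtain ⟨Q₁, Q₂, rfl, hq1, hq2⟩ :=
              multiset_map_split (fun pr => pr.2.1) (a.1 j) Q hQt
            obtain ⟨m, d, e⟩ := hIH a List.mem_cons_self Q₁
              (fun pr hpr => hQ pr (Multiset.mem_add.mpr (Or.inl hpr))) hq1
            obtain ⟨l', hl1, hl2, hl3, hl4⟩ :=
              ihl (fun b hb => hIH b (List.mem_cons_of_mem a hb)) Q₂
              (fun pr hpr => hQ pr (Multiset.mem_add.mpr (Or.inr hpr))) hq2
            refine ⟨(ctxOut j n a.1 + (Q₁.map (fun pr => push (· + j) pr.1)).sum,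
                a.2.1, m) :: l', ?_, ?_, ?_, ?_⟩
            · intro b hb
              rcases List.mem_cons.mp hb with rfl | hb
              · exact d
              · exact hl1 b hb
            · simp only [List.map_cons, hl2]
            · simp only [List.map_cons, List.sum_cons, hl3, ctxOut_add,
                Multiset.map_add, Multiset.sum_add]
              abel
            · simp only [List.map_cons, List.sum_cons]
              have hcard : Multiset.card (((a.1 + (l.map (fun a : Ctx × Ty × ℕ => a.1)).sum)) j) =
                  Multiset.card (a.1 j) +
                    Multiset.card (((l.map (fun a : Ctx × Ty × ℕ => a.1)).sum) j) :=
                Multiset.card_add _ _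
              rw [hcard, Multiset.map_add, Multiset.sum_add]
              omega
      have hPt' : P.map (fun pr => pr.2.1) = (prs.map (fun a => a.1 j)).sum := by
        rw [hPt, lsum_apply, List.map_map]
        rfl
      obtain ⟨l', hl1, hl2, hl3, hl4⟩ := hrec prs
        (fun a ha Q hQ hQt => ih a ha j n u Q hQ hQt) P hP hPt'
      refine ⟨(l'.map (fun a => a.2.2)).sum, ?_, ?_⟩
      · have hb := DerU.bg l' hl1
        rw [hl2, hl3] at hb
        exact hb
      · exact hl4
  | @dr Γ₁ t₁ σ₁ n₁ h ih =>
      intro j n u P hP hPt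
      obtain ⟨m, d, e⟩ := ih j n u P hP hPt
      exact ⟨m + 1, DerU.dr d, by omega⟩

/- ## The three root cases -/

theorem der_aux {t : Tm} : ∀ (L : List Tm) {Γ : Ctx} {σ : Ty} {p : ℕ},
    DerU Γ (Tm.plug L (Tm.bang t)) (Ty.mult [σ]) p → DerU Γ (Tm.plug L t) σ p := by
  intro L
  induction L with
  | nil =>
      intro Γ σ p h
      generalize hTy : Ty.mult [σ] = T at h
      cases h with
      | bg prs hder =>
          injection hTy with hmap
          cases prs with
          | nil => simp at hmap
          | cons a l =>
              cases l with
              | nil =>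
                  simp only [List.map_cons, List.map_nil, List.cons.injEq,
                    and_true] at hmap
                  simp only [List.map_cons, List.map_nil, List.sum_cons,
                    List.sum_nil, add_zero]
                  rw [hmap]
                  exact hder a List.mem_cons_self
              | cons b l' => simp at hmap
  | cons e L ihL =>
      intro Γ σ p h
      cases h with
      | es h1 h2 hM => exact DerU.es (ihL h1) h2 hM

theorem db_aux {M : List Ty} {τ : Ty} {t : Tm} :
    ∀ (L : List Tm) {Γ₁ : Ctx} {n₁ : ℕ} {Δ : Ctx} {u : Tm} {n₂ : ℕ},
    DerU Γ₁ (Tm.plug L (Tm.lam t)) (Ty.arr M τ) n₁ →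
    DerU Δ u (Ty.mult M) n₂ →
    DerU (Γ₁ + Δ) (Tm.plug L (Tm.esub t (Tm.rename (· + L.length) u))) τ (n₁ + n₂) := by
  intro L
  induction L with
  | nil =>
      intro Γ₁ n₁ Δ u n₂ h1 h2
      cases h1 with
      | abs M' hb hM' =>
          have hu : Tm.rename (· + ([] : List Tm).length) u = u :=
            rename_id u (fun k => rfl)
          rw [show Tm.plug [] (Tm.esub t (Tm.rename (· + ([] : List Tm).length) u))
              = Tm.esub t u by rw [hu]; rfl]
          rename_i Γb nb
          have := DerU.es hb h2 hM'
          rw [show nb + 1 + n₂ = nb + n₂ + 1 by omega]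
          exact this
  | cons e L ihL =>
      intro Γ₁ n₁ Δ u n₂ h1 h2
      cases h1 with
      | es hA hB hMe =>
          rename_i Γ' Δe Me p qe
          have hu' : DerU (push (· + 1) Δ) (Tm.rename (· + 1) u) (Ty.mult M) n₂ :=
            derU_rename h2 (· + 1) (shift_inj 1)
          have hIH := ihL hA hu'
          have hren : Tm.rename (· + L.length) (Tm.rename (· + 1) u)
              = Tm.rename (· + (e :: L).length) u := by
            rw [rename_rename]
            exact rename_congr u (fun k => by
              show k + 1 + L.length = k + (e :: L).length
              simp only [List.length_cons]
              omega)
          rw [hren] at hIH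
          have hC0 : Multiset.ofList Me = (Γ' + push (· + 1) Δ) 0 := by
            show Multiset.ofList Me = Γ' 0 + push (· + 1) Δ 0
            rw [push_not_mem (fun k => by omega), add_zero]
            exact hMe
          have hd := DerU.es hIH hB hC0
          have htail : Ctx.tail (Γ' + push (· + 1) Δ) = Ctx.tail Γ' + Δ := by
            rw [tail_add]
            congr 1
            rw [show ((· + 1) : ℕ → ℕ) = (· + (0 + 1)) by funext k; omega,
              tail_push_shift_succ, push_shift_zero]
          rw [htail] at hd
          have hctx : Ctx.tail Γ' + Δ + Δe = Ctx.tail Γ' + Δe + Δ := by abel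
          rw [hctx] at hd
          rw [show p + qe + 1 + n₂ = p + n₂ + qe + 1 by omega]
          exact hd

theorem sb_aux {u : Tm} :
    ∀ (L : List Tm) {Δ : Ctx} {q : ℕ} {M : List Ty},
    DerU Δ (Tm.plug L (Tm.bang u)) (Ty.mult M) q →
    ∀ {Γ₀ : Ctx} {t : Tm} {σ : Ty} {p : ℕ} (i : ℕ),
    DerU Γ₀ t σ p → Multiset.ofList M = Γ₀ 0 →
    ∃ m, DerU (push (· + i) (Ctx.tail Γ₀) + Δ)
              (Tm.plug L (Tm.substIn (L.length + i) u t)) σ m ∧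
         m + Multiset.card (Γ₀ 0) = p + q := by
  intro L
  induction L with
  | nil =>
      intro Δ q M hΔ Γ₀ t σ p i h hM
      cases hΔ with
      | bg prs hder =>
          obtain ⟨m, d, e⟩ := substGen h 0 i u (↑prs)
            (fun pr hpr => hder pr (by simpa using hpr))
            (by rw [Multiset.map_coe]; exact hM)
          refine ⟨m, ?_, ?_⟩
          · rw [ctxOut_zero_eq_push] at d
            have hmap : (Multiset.map (fun pr => push (· + 0) pr.1) (↑prs : Multiset (Ctx × Ty × ℕ))).sum
                = (prs.map (fun a => a.1)).sum := by
              rw [Multiset.map_coe, Multiset.sum_coe]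
              congr 1
              exact List.map_congr_left (fun pr _ => push_shift_zero pr.1)
            rw [hmap] at d
            show DerU _ (Tm.plug [] (Tm.substIn (0 + i) u t)) σ m
            rw [show (0 : ℕ) + i = i by omega]
            show DerU _ (Tm.substIn i u t) σ m
            rw [substIn_eq_subst_Sg]
            exact d
          · rw [Multiset.map_coe, Multiset.sum_coe] at e
            rw [← hM] at e
            rw [← hM]
            exact e
  | cons e L ihL =>
      intro Δ q M hΔ Γ₀ t σ p i h hM
      cases hΔ with
      | es hA hB hMe =>
          rename_i Δ₁ Δe Me q₁ qe
          obtain ⟨m₁, d₁, e₁⟩ := ihL hA (i + 1) h hM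
          have hC0 : Multiset.ofList Me =
              (push (· + (i + 1)) (Ctx.tail Γ₀) + Δ₁) 0 := by
            show Multiset.ofList Me = push (· + (i + 1)) (Ctx.tail Γ₀) 0 + Δ₁ 0
            rw [push_shift_succ_zero, zero_add]
            exact hMe
          have hd := DerU.es d₁ hB hC0
          have htail : Ctx.tail (push (· + (i + 1)) (Ctx.tail Γ₀) + Δ₁)
              = push (· + i) (Ctx.tail Γ₀) + Ctx.tail Δ₁ := by
            rw [tail_add, tail_push_shift_succ]
          rw [htail] at hd
          have hctx : push (· + i) (Ctx.tail Γ₀) + Ctx.tail Δ₁ + Δe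
              = push (· + i) (Ctx.tail Γ₀) + (Ctx.tail Δ₁ + Δe) := by abel
          rw [hctx] at hd
          refine ⟨m₁ + qe + 1, ?_, by omega⟩
          show DerU _ (Tm.esub (Tm.plug L (Tm.substIn ((e :: L).length + i) u t)) e) σ _
          rw [show (e :: L).length + i = L.length + (i + 1) by simp [List.length]; omega]
          exact hd

end SRaux

/-- **Weighted subject reduction for system 𝒰** (Lemma 7): if `Γ ⊢ t : τ` has
a derivation of size `n` and `t →w t'`, then `Γ ⊢ t' : τ` has a derivation of
size `m < n`. -/
theorem weighted_subject_reduction {Γ : Ctx} {t t' : Tm} {τ : Ty} {n : ℕ}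
    (h : DerU Γ t τ n) (hs : StepW t t') :
    ∃ m : ℕ, DerU Γ t' τ m ∧ m < n := by
  obtain ⟨r, st⟩ := hs
  revert h
  induction st generalizing Γ τ n with
  | root hr =>
      intro h
      cases hr with
      | dB L t u =>
          cases h with
          | app h1 h2 => exact ⟨_, SRaux.db_aux L h1 h2, by omega⟩
      | sb L t u =>
          cases h with
          | es h1 h2 hM =>
              obtain ⟨m, d, e⟩ := SRaux.sb_aux L h2 0 h1 hM
              rw [SRaux.push_shift_zero] at d
              exact ⟨m, d, by omega⟩
      | db L t =>
          cases h with
          | dr h1 => exact ⟨_, SRaux.der_aux L h1, by omega⟩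
  | appL u st ih =>
      intro h
      cases h with
      | app h1 h2 =>
          obtain ⟨m, d, hm⟩ := ih h1
          exact ⟨_, DerU.app d h2, by omega⟩
  | appR t st ih =>
      intro h
      cases h with
      | app h1 h2 =>
          obtain ⟨m, d, hm⟩ := ih h2
          exact ⟨_, DerU.app h1 d, by omega⟩
  | lam st ih =>
      intro h
      cases h with
      | abs M h1 hM =>
          obtain ⟨m, d, hm⟩ := ih h1
          exact ⟨_, DerU.abs M d hM, by omega⟩
  | der st ih =>
      intro h
      cases h with
      | dr h1 =>
          obtain ⟨m, d, hm⟩ := ih h1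
          exact ⟨_, DerU.dr d, by omega⟩
  | esubL u st ih =>
      intro h
      cases h with
      | es h1 h2 hM =>
          obtain ⟨m, d, hm⟩ := ih h1
          exact ⟨_, DerU.es d h2 hM, by omega⟩
  | esubR t st ih =>
      intro h
      cases h with
      | es h1 h2 hM =>
          obtain ⟨m, d, hm⟩ := ih h2
          exact ⟨_, DerU.es h1 d hM, by omega⟩
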